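/- Let $a_1, \dots, a_n$ be positive integers, $\beta_i = \sqrt{a_i}$, and $x \in \mathbb{Z}^n\setminus\{0\}$. Let $Q \geq (2n\|x\|_\infty)^{3/2}$ be a real number and let $B$ be the $(n+1)\times(n+1)$ matrix with $B_{11} = 1/Q^{n+1}$, $B_{i+1,1} = \beta_i$, $B_{i+1,i+1} = 1$ and all other entries zero. Suppose the first successive minimum (w.r.t. $\ell_\infty$) of the lattice generated by $B$ satisfies $\lambda_1 \geq 1/Q^{1 + \frac{1}{3n}}$. Then $\left|\sum_{i=1}^n x_i \sqrt{a_i}\right| \geq \frac{1}{Q^{n+1}}$. -/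

import Mathlib

/-- The `k`-th successive minimum (w.r.t. the `ℓ∞`-norm, which is the norm on
`Fin n → ℝ`) of the lattice generated by the matrix `A`. -/
noncomputable def succMin (n : ℕ) (A : Matrix (Fin n) (Fin n) ℝ) (k : ℕ) : ℝ :=
  sInf {R : ℝ | 0 < R ∧ ∃ v : Fin k → Fin n → ℤ,
    LinearIndependent ℝ (fun j => A.mulVec fun i => ((v j i : ℝ))) ∧
    ∀ j, ‖A.mulVec fun i => ((v j i : ℝ))‖ ≤ R}

/-- The matrix `B` with first column `(c, β₁, …, βₙ)ᵀ` and identity elsewhere. -/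
noncomputable def Bmat (n : ℕ) (c : ℝ) (β : Fin n → ℝ) :
    Matrix (Fin (n + 1)) (Fin (n + 1)) ℝ :=
  Matrix.of fun i j =>
    if j = 0 then (Fin.cases c β i : ℝ) else if i = j then 1 else 0

/-- The `ℓ∞`-norm of an integer vector, as a real number. -/
noncomputable def intNormInf (n : ℕ) (x : Fin n → ℤ) : ℝ :=
  ((Finset.univ.sup fun i => (x i).natAbs : ℕ) : ℝ)

open MeasureTheory Module Submodule
open scoped ENNReal


/-- helper for discrete IVT, positive start case -/
private lemma dIVT_pos (n : ℕ) (hn : 1 ≤ n) (T : ℕ → ℝ) {θ : ℝ}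
    (hend : T n = - T 0) (hstep : ∀ m, m < n → |T (m+1) - T m| ≤ 2*θ)
    (h0 : θ < T 0) : ∃ m, m < n ∧ |T m| ≤ θ := by
  by_contra hc
  push_neg at hc
  have key : ∀ m, m < n → θ < T m := by
    intro m
    induction m with
    | zero => intro _; exact h0
    | succ k ih =>
      intro hk1
      have hk : k < n := Nat.lt_of_succ_lt hk1
      have h1 : θ < T k := ih hk
      have h2 : |T (k+1) - T k| ≤ 2*θ := hstep k hk
      have h3 : θ < |T (k+1)| := hc (k+1) hk1
      have h4 : -θ < T (k+1) := by
        have := abs_le.mp h2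
        linarith [this.1]
      rcases lt_abs.mp h3 with h | h
      · exact h
      · linarith
  have hn1 : n - 1 < n := by omega
  have h1 : θ < T (n-1) := key (n-1) hn1
  have h2 : |T (n-1+1) - T (n-1)| ≤ 2*θ := hstep (n-1) hn1
  have he : n - 1 + 1 = n := by omega
  rw [he] at h2
  have := abs_le.mp h2
  have hTn : -θ < T n := by linarith
  rw [hend] at hTn
  linarith

/-- Discrete intermediate value: a walk with steps ≤ 2θ from S to -S passes within θ of 0,
before the last step. -/
lemma discreteIVT (n : ℕ) (hn : 1 ≤ n) (T : ℕ → ℝ) {θ : ℝ} (hθ : 0 ≤ θ)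
    (hend : T n = - T 0) (hstep : ∀ m, m < n → |T (m+1) - T m| ≤ 2*θ) :
    ∃ m, m < n ∧ |T m| ≤ θ := by
  rcases le_or_gt (|T 0|) θ with h0 | h0
  · exact ⟨0, hn, h0⟩
  rcases lt_abs.mp h0 with h | h
  · exact dIVT_pos n hn T hend hstep h
  · have := dIVT_pos n hn (fun m => - T m) (by simp [hend])
      (fun m hm => by
        have := hstep m hm
        calc |(fun m => -T m) (m+1) - (fun m => -T m) m| = |T (m+1) - T m| := by
              simp only []; rw [← abs_neg]; ring_nf
          _ ≤ 2*θ := this)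
      (by simpa using h)
    obtain ⟨m, hm, hm2⟩ := this
    exact ⟨m, hm, by simpa [abs_neg] using hm2⟩

section SlabLemma

variable {n : ℕ}

/-- the sign flip map -/
noncomputable def flipMap (S : Finset (Fin (n+1))) : (Fin (n+1) → ℝ) → (Fin (n+1) → ℝ) :=
  fun y i => if i ∈ S then -y i else y i

lemma flip_measurePreserving (S : Finset (Fin (n+1))) :
    MeasurePreserving (flipMap S) (volume : Measure (Fin (n+1) → ℝ)) volume := by
  have h : ∀ i : Fin (n+1), MeasurePreserving (fun t : ℝ => if i ∈ S then -t else t)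
      volume volume := by
    intro i
    by_cases h : i ∈ S
    · simpa [h] using Measure.measurePreserving_neg (volume : Measure ℝ)
    · simp only [h, ↓reduceIte]; exact MeasurePreserving.id (volume : Measure ℝ)
  have h2 := MeasureTheory.volume_preserving_pi h
  exact h2

/-- The key slab set. -/
def slabK (j : Fin (n+1)) (d : Fin (n+1) → ℝ) (r₀ M G : ℝ) : Set (Fin (n+1) → ℝ) :=
  {y | (∀ i, i ≠ j → |y i| ≤ r₀) ∧
    |∑ k : Fin n, d (j.succAbove k) * y (j.succAbove k)| ≤ M * r₀ ∧
    |∑ i, d i * y i| ≤ G}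

lemma slabK_measurable (j : Fin (n+1)) (d : Fin (n+1) → ℝ) (r₀ M G : ℝ) :
    MeasurableSet (slabK j d r₀ M G) := by
  have h1 : ∀ i : Fin (n+1), Measurable (fun y : Fin (n+1) → ℝ => y i) :=
    fun i => measurable_pi_apply i
  have hA : MeasurableSet {y : Fin (n+1) → ℝ | ∀ i, i ≠ j → |y i| ≤ r₀} := by
    have he : {y : Fin (n+1) → ℝ | ∀ i, i ≠ j → |y i| ≤ r₀} =
        ⋂ i, {y : Fin (n+1) → ℝ | i ≠ j → |y i| ≤ r₀} := by
      ext y; simp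
    rw [he]
    apply MeasurableSet.iInter
    intro i
    rcases Classical.em (i = j) with h | h
    · have : {y : Fin (n+1) → ℝ | i ≠ j → |y i| ≤ r₀} = Set.univ := by
        ext y; simp [h]
      rw [this]; exact MeasurableSet.univ
    · have : {y : Fin (n+1) → ℝ | i ≠ j → |y i| ≤ r₀} = {y | |y i| ≤ r₀} := by
        ext y; simp [h]
      rw [this]
      exact measurableSet_le ((h1 i).abs) measurable_const
  have hB : MeasurableSet {y : Fin (n+1) → ℝ |
      |∑ k : Fin n, d (j.succAbove k) * y (j.succAbove k)| ≤ M * r₀} := by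
    have : Measurable (fun y : Fin (n+1) → ℝ =>
        ∑ k : Fin n, d (j.succAbove k) * y (j.succAbove k)) :=
      Finset.measurable_sum _ fun k _ => (measurable_const.mul (h1 _))
    exact measurableSet_le this.abs measurable_const
  have hC : MeasurableSet {y : Fin (n+1) → ℝ | |∑ i, d i * y i| ≤ G} := by
    have : Measurable (fun y : Fin (n+1) → ℝ => ∑ i, d i * y i) :=
      Finset.measurable_sum _ fun i _ => (measurable_const.mul (h1 _))
    exact measurableSet_le this.abs measurable_const
  exact hA.inter (hB.inter hC)

lemma slabK_symm (j : Fin (n+1)) (d : Fin (n+1) → ℝ) (r₀ M G : ℝ) :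
    ∀ y ∈ slabK j d r₀ M G, -y ∈ slabK j d r₀ M G := by
  rintro y ⟨h1, h2, h3⟩
  refine ⟨fun i hi => ?_, ?_, ?_⟩
  · simpa using h1 i hi
  · have : ∑ k : Fin n, d (j.succAbove k) * (-y) (j.succAbove k)
        = -∑ k : Fin n, d (j.succAbove k) * y (j.succAbove k) := by
      rw [← Finset.sum_neg_distrib]
      exact Finset.sum_congr rfl fun k _ => by simp
    rw [this, abs_neg]; exact h2
  · have : ∑ i, d i * (-y) i = -∑ i, d i * y i := by
      rw [← Finset.sum_neg_distrib]
      exact Finset.sum_congr rfl fun i _ => by simp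
    rw [this, abs_neg]; exact h3

lemma slabK_convex (j : Fin (n+1)) (d : Fin (n+1) → ℝ) (r₀ M G : ℝ) :
    Convex ℝ (slabK j d r₀ M G) := by
  rintro y₁ ⟨h1, h2, h3⟩ y₂ ⟨g1, g2, g3⟩ p q hp hq hpq
  have habs : ∀ (u v t : ℝ), |u| ≤ t → |v| ≤ t → |p * u + q * v| ≤ t := by
    intro u v t hu hv
    calc |p * u + q * v| ≤ |p * u| + |q * v| := abs_add_le _ _
      _ = p * |u| + q * |v| := by rw [abs_mul, abs_mul, abs_of_nonneg hp, abs_of_nonneg hq]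
      _ ≤ p * t + q * t := by
          apply add_le_add (mul_le_mul_of_nonneg_left hu hp) (mul_le_mul_of_nonneg_left hv hq)
      _ = t := by rw [← add_mul, hpq, one_mul]
  refine ⟨fun i hi => ?_, ?_, ?_⟩
  · have : (p • y₁ + q • y₂) i = p * y₁ i + q * y₂ i := by simp
    rw [this]; exact habs _ _ _ (h1 i hi) (g1 i hi)
  · have : ∑ k : Fin n, d (j.succAbove k) * (p • y₁ + q • y₂) (j.succAbove k)
        = p * (∑ k : Fin n, d (j.succAbove k) * y₁ (j.succAbove k))
          + q * (∑ k : Fin n, d (j.succAbove k) * y₂ (j.succAbove k)) := by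
      rw [Finset.mul_sum, Finset.mul_sum, ← Finset.sum_add_distrib]
      exact Finset.sum_congr rfl fun k _ => by simp; ring
    rw [this]; exact habs _ _ _ h2 g2
  · have : ∑ i, d i * (p • y₁ + q • y₂) i
        = p * (∑ i, d i * y₁ i) + q * (∑ i, d i * y₂ i) := by
      rw [Finset.mul_sum, Finset.mul_sum, ← Finset.sum_add_distrib]
      exact Finset.sum_congr rfl fun i _ => by simp; ring
    rw [this]; exact habs _ _ _ h3 g3

lemma slabK_covering (hn : 1 ≤ n) (j : Fin (n+1)) (d : Fin (n+1) → ℝ) (r₀ M G : ℝ)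
    (hr₀ : 0 ≤ r₀) (hM : 0 < M) (hd : ∀ i, |d i| ≤ M) (hMG : M * r₀ ≤ G) :
    (Set.univ.pi fun i => Set.Icc (-(if i = j then (G - M*r₀)/M else r₀))
        (if i = j then (G - M*r₀)/M else r₀)) ⊆
      ⋃ m ∈ Finset.range n, (flipMap (Finset.image j.succAbove
        (Finset.univ.filter fun k : Fin n => (k:ℕ) < m)) ⁻¹' slabK j d r₀ M G) := by
  intro y hy
  have hyi : ∀ i, |y i| ≤ (if i = j then (G - M*r₀)/M else r₀) := by
    intro i
    have := hy i (Set.mem_univ i)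
    rw [Set.mem_Icc] at this
    exact abs_le.mpr this
  have hyj : |y j| ≤ (G - M*r₀)/M := by simpa using hyi j
  have hyne : ∀ i, i ≠ j → |y i| ≤ r₀ := by
    intro i hi
    have := hyi i
    rwa [if_neg hi] at this
  set gg : Fin n → ℝ := fun k => d (j.succAbove k) * y (j.succAbove k) with hgg
  have hggle : ∀ k, |gg k| ≤ M * r₀ := by
    intro k
    rw [hgg]
    calc |d (j.succAbove k) * y (j.succAbove k)|
        = |d (j.succAbove k)| * |y (j.succAbove k)| := abs_mul _ _
      _ ≤ M * r₀ := by
          apply mul_le_mul (hd _) (hyne _ (Fin.succAbove_ne j k)) (abs_nonneg _) hM.le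
  set T : ℕ → ℝ := fun m =>
    (∑ k, gg k) - 2 * ∑ k ∈ Finset.univ.filter (fun k : Fin n => (k:ℕ) < m), gg k with hT
  have hend : T n = - T 0 := by
    rw [hT]
    simp only []
    have h1 : (Finset.univ.filter (fun k : Fin n => (k:ℕ) < 0)) = ∅ := by
      apply Finset.filter_false_of_mem; intro k _; omega
    have h2 : (Finset.univ.filter (fun k : Fin n => (k:ℕ) < n)) = Finset.univ := by
      apply Finset.filter_true_of_mem; intro k _; exact k.isLt
    rw [h1, h2]
    simp; ring
  have hstep : ∀ m, m < n → |T (m+1) - T m| ≤ 2 * (M * r₀) := by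
    intro m hm
    have hins : (Finset.univ.filter (fun k : Fin n => (k:ℕ) < m+1))
        = insert (⟨m, hm⟩ : Fin n) (Finset.univ.filter (fun k : Fin n => (k:ℕ) < m)) := by
      ext k
      simp only [Finset.mem_filter, Finset.mem_univ, true_and, Finset.mem_insert]
      constructor
      · intro hk
        rcases Nat.lt_succ_iff_lt_or_eq.mp hk with h | h
        · exact Or.inr h
        · exact Or.inl (Fin.ext h)
      · rintro (h | h)
        · subst h; simp
        · omega
    have hnotmem : (⟨m, hm⟩ : Fin n) ∉ Finset.univ.filter (fun k : Fin n => (k:ℕ) < m) := by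
      simp
    have : T (m+1) - T m = -2 * gg ⟨m, hm⟩ := by
      rw [hT]
      simp only []
      rw [hins, Finset.sum_insert hnotmem]
      ring
    rw [this]
    rw [abs_mul, abs_neg]
    simp only [abs_two]
    exact mul_le_mul_of_nonneg_left (hggle _) (by norm_num)
  obtain ⟨m, hm, hTm⟩ := discreteIVT n hn T (by positivity) hend hstep
  set S := Finset.image j.succAbove (Finset.univ.filter fun k : Fin n => (k:ℕ) < m) with hS
  have hmemS : ∀ k : Fin n, (j.succAbove k ∈ S) ↔ (k:ℕ) < m := by
    intro k
    rw [hS, Finset.mem_image]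
    constructor
    · rintro ⟨k', hk', he⟩
      have : k' = k := Fin.succAbove_right_injective he
      rw [← this]
      simpa using hk'
    · intro hk
      exact ⟨k, by simpa using hk, rfl⟩
  have hjS : j ∉ S := by
    rw [hS, Finset.mem_image]
    rintro ⟨k, _, he⟩
    exact Fin.succAbove_ne j k he
  have hφj : flipMap S y j = y j := by rw [flipMap, if_neg hjS]
  have hφk : ∀ k : Fin n, d (j.succAbove k) * flipMap S y (j.succAbove k)
      = if (k:ℕ) < m then -gg k else gg k := by
    intro k
    rw [flipMap]
    rcases Classical.em ((k:ℕ) < m) with h | h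
    · rw [if_pos ((hmemS k).mpr h), if_pos h, hgg]; ring
    · rw [if_neg (fun hc => h ((hmemS k).mp hc)), if_neg h]
  have hsum2 : ∑ k : Fin n, d (j.succAbove k) * flipMap S y (j.succAbove k) = T m := by
    calc ∑ k : Fin n, d (j.succAbove k) * flipMap S y (j.succAbove k)
        = ∑ k : Fin n, (if (k:ℕ) < m then -gg k else gg k) :=
          Finset.sum_congr rfl fun k _ => hφk k
      _ = ∑ k ∈ Finset.univ.filter (fun k : Fin n => (k:ℕ) < m), (-gg k)
          + ∑ k ∈ Finset.univ.filter (fun k : Fin n => ¬((k:ℕ) < m)), gg k := by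
          rw [← Finset.sum_filter_add_sum_filter_not Finset.univ (fun k : Fin n => (k:ℕ) < m)]
          congr 1
          · exact Finset.sum_congr rfl fun k hk => by
              rw [if_pos (by simpa using (Finset.mem_filter.mp hk).2)]
          · exact Finset.sum_congr rfl fun k hk => by
              rw [if_neg (by simpa using (Finset.mem_filter.mp hk).2)]
      _ = T m := by
          rw [hT]
          simp only []
          have := Finset.sum_filter_add_sum_filter_not Finset.univ
            (fun k : Fin n => (k:ℕ) < m) gg
          rw [Finset.sum_neg_distrib]
          linarith [this]
  have hmem : flipMap S y ∈ slabK j d r₀ M G := by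
    refine ⟨fun i hi => ?_, ?_, ?_⟩
    · rw [flipMap]
      rcases Classical.em (i ∈ S) with h | h
      · rw [if_pos h, abs_neg]; exact hyne i hi
      · rw [if_neg h]; exact hyne i hi
    · rw [hsum2]; exact hTm
    · have hsplit : ∑ i, d i * flipMap S y i
          = d j * y j + T m := by
        rw [Fin.sum_univ_succAbove (fun i => d i * flipMap S y i) j, hφj, hsum2]
      rw [hsplit]
      calc |d j * y j + T m| ≤ |d j * y j| + |T m| := abs_add_le _ _
        _ ≤ M * ((G - M*r₀)/M) + M * r₀ := by
            apply add_le_add _ hTm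
            rw [abs_mul]
            apply mul_le_mul (hd j) hyj (abs_nonneg _) hM.le
        _ = G := by field_simp; ring
  exact Set.mem_iUnion₂.mpr ⟨m, Finset.mem_range.mpr hm, hmem⟩

lemma slabK_volume (hn : 1 ≤ n) (j : Fin (n+1)) (d : Fin (n+1) → ℝ) (r₀ M G : ℝ)
    (hr₀ : 0 ≤ r₀) (hM : 0 < M) (hd : ∀ i, |d i| ≤ M) (hMG : M * r₀ ≤ G) :
    ENNReal.ofReal (2*((G - M*r₀)/M) * (2*r₀)^n)
      ≤ (n : ℝ≥0∞) * volume (slabK j d r₀ M G) := by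
  classical
  set G' := (G - M*r₀)/M with hG'
  have hG'0 : 0 ≤ G' := by
    rw [hG']
    apply div_nonneg (by linarith) hM.le
  set Cs : Set (Fin (n+1) → ℝ) := Set.univ.pi fun i =>
    Set.Icc (-(if i = j then G' else r₀)) (if i = j then G' else r₀) with hCs
  have hvolCs : volume Cs = ENNReal.ofReal (2*G') * (ENNReal.ofReal (2*r₀))^n := by
    rw [hCs, volume_pi_pi]
    have hterm : ∀ i : Fin (n+1),
        volume (Set.Icc (-(if i = j then G' else r₀)) (if i = j then G' else r₀))
          = ENNReal.ofReal (2 * (if i = j then G' else r₀)) := by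
      intro i
      rw [Real.volume_Icc]
      congr 1
      ring
    simp_rw [hterm]
    rw [Fin.prod_univ_succAbove
      (fun i : Fin (n+1) => ENNReal.ofReal (2 * (if i = j then G' else r₀))) j]
    rw [if_pos rfl]
    congr 1
    rw [Finset.prod_congr rfl (fun k _ => by rw [if_neg (Fin.succAbove_ne j k)])]
    rw [Finset.prod_const]
    simp
  have hcover := slabK_covering hn j d r₀ M G hr₀ hM hd hMG
  have hbound : volume Cs ≤ (n : ℝ≥0∞) * volume (slabK j d r₀ M G) := by
    calc volume Cs ≤ volume (⋃ m ∈ Finset.range n, (flipMap (Finset.image j.succAbove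
          (Finset.univ.filter fun k : Fin n => (k:ℕ) < m)) ⁻¹' slabK j d r₀ M G)) :=
          measure_mono hcover
      _ ≤ ∑ m ∈ Finset.range n, volume ((flipMap (Finset.image j.succAbove
          (Finset.univ.filter fun k : Fin n => (k:ℕ) < m)) ⁻¹' slabK j d r₀ M G)) :=
          measure_biUnion_finset_le _ _
      _ = ∑ m ∈ Finset.range n, volume (slabK j d r₀ M G) := by
          apply Finset.sum_congr rfl
          intro m _
          exact (flip_measurePreserving _).measure_preimage
            (slabK_measurable j d r₀ M G).nullMeasurableSet
      _ = (n : ℝ≥0∞) * volume (slabK j d r₀ M G) := by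
          rw [Finset.sum_const, Finset.card_range]
          simp [nsmul_eq_mul]
  calc ENNReal.ofReal (2*G' * (2*r₀)^n)
      = ENNReal.ofReal (2*G') * (ENNReal.ofReal (2*r₀))^n := by
        rw [ENNReal.ofReal_mul (by linarith), ENNReal.ofReal_pow (by linarith)]
    _ = volume Cs := hvolCs.symm
    _ ≤ (n : ℝ≥0∞) * volume (slabK j d r₀ M G) := hbound

end SlabLemma

section Minkowski

lemma minkowski_mulVec (n : ℕ) (A : Matrix (Fin (n+1)) (Fin (n+1)) ℝ)
    (hdet : A.det ≠ 0) (K : Set (Fin (n+1) → ℝ))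
    (hKsymm : ∀ y ∈ K, -y ∈ K) (hKconv : Convex ℝ K)
    (hvol : ENNReal.ofReal |A.det| * 2^(n+1) < volume K) :
    ∃ z : Fin (n+1) → ℤ, A.mulVec (fun i => (z i : ℝ)) ≠ 0 ∧
      A.mulVec (fun i => (z i : ℝ)) ∈ K := by
  classical
  have hinv : Invertible A := A.invertibleOfIsUnitDet (Ne.isUnit hdet)
  set e := A.toLinearEquiv' hinv with he
  set b : Basis (Fin (n+1)) ℝ (Fin (n+1) → ℝ) := (Pi.basisFun ℝ (Fin (n+1))).map e with hb
  have hbapply : ∀ i k, b i k = A k i := by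
    intro i k
    rw [hb]
    simp only [Basis.map_apply, Pi.basisFun_apply]
    have : e (Pi.single i 1) = A.mulVec (Pi.single i 1) := by
      rw [he]
      rfl
    rw [this, Matrix.mulVec_single]
    simp
  have hfund := ZSpan.isAddFundamentalDomain' b (volume : Measure (Fin (n+1) → ℝ))
  have hcnt : Countable (span ℤ (Set.range ⇑b)).toAddSubgroup := by
    have : Countable (span ℤ (Set.range ⇑b)) := by infer_instance
    exact this
  have hvolF : volume (ZSpan.fundamentalDomain b) = ENNReal.ofReal |A.det| := by
    rw [ZSpan.volume_fundamentalDomain]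
    congr 1
    have : (Matrix.of ⇑b) = A.transpose := by
      ext i k
      exact hbapply i k
    rw [this, Matrix.det_transpose]
  have hrank : Module.finrank ℝ (Fin (n+1) → ℝ) = n + 1 := by
    rw [Module.finrank_pi]
    simp
  obtain ⟨u, hu0, huK⟩ := exists_ne_zero_mem_lattice_of_measure_mul_two_pow_lt_measure
    hfund hKsymm hKconv (by rw [hvolF, hrank]; exact hvol)
  have humem : (u : Fin (n+1) → ℝ) ∈ span ℤ (Set.range ⇑b) := by
    have := u.2
    rwa [Submodule.mem_toAddSubgroup] at this
  obtain ⟨z, hz⟩ := (mem_span_range_iff_exists_fun ℤ).mp humem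
  have hmv : A.mulVec (fun i => (z i : ℝ)) = (u : Fin (n+1) → ℝ) := by
    rw [← hz]
    funext k
    rw [Matrix.mulVec, dotProduct]
    rw [Finset.sum_apply]
    apply Finset.sum_congr rfl
    intro i _
    rw [Pi.smul_apply, hbapply i k, zsmul_eq_mul]
    ring
  have hune : (u : Fin (n+1) → ℝ) ≠ 0 := by
    simpa using hu0
  exact ⟨z, by rw [hmv]; exact hune, by rw [hmv]; exact huK⟩

end Minkowski

lemma Bmat_apply (n : ℕ) (c : ℝ) (β : Fin n → ℝ) (i j : Fin (n+1)) :
    Bmat n c β i j = if j = 0 then (Fin.cases c β i : ℝ) else if i = j then 1 else 0 := rfl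

lemma Bmat_row_zero (n : ℕ) (c : ℝ) (β : Fin n → ℝ) (j : Fin (n+1)) :
    Bmat n c β 0 j = if j = 0 then c else 0 := by
  rw [Bmat_apply]
  rcases Classical.em (j = 0) with h | h
  · simp [h]
  · rw [if_neg h, if_neg h, if_neg (fun hc => h hc.symm)]

lemma Bmat_row_succ (n : ℕ) (c : ℝ) (β : Fin n → ℝ) (k : Fin n) (j : Fin (n+1)) :
    Bmat n c β k.succ j = if j = 0 then β k else if k.succ = j then 1 else 0 := by
  rw [Bmat_apply]
  rcases Classical.em (j = 0) with h | h
  · simp [h]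
  · rw [if_neg h, if_neg h]

lemma Bmat_det (n : ℕ) (c : ℝ) (β : Fin n → ℝ) : (Bmat n c β).det = c := by
  rw [Matrix.det_succ_row_zero]
  rw [Finset.sum_eq_single 0]
  · rw [Bmat_row_zero]
    rw [if_pos rfl]
    have hsub : (Bmat n c β).submatrix Fin.succ (Fin.succAbove 0) = 1 := by
      ext k l
      rw [Matrix.submatrix_apply, Fin.succAbove_zero, Bmat_row_succ]
      rw [if_neg (Fin.succ_ne_zero l)]
      rw [Matrix.one_apply]
      rcases Classical.em (k = l) with h | h
      · rw [if_pos h, if_pos (by rw [h])]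
      · rw [if_neg h, if_neg (fun hc => h (Fin.succ_injective n hc))]
    rw [hsub, Matrix.det_one]
    simp
  · intro j _ hj
    rw [Bmat_row_zero, if_neg hj]
    ring
  · intro h
    simp at h

lemma Bmat_mulVec_zero (n : ℕ) (c : ℝ) (β : Fin n → ℝ) (w : Fin (n+1) → ℝ) :
    (Bmat n c β).mulVec w 0 = c * w 0 := by
  rw [Matrix.mulVec, dotProduct]
  rw [Finset.sum_eq_single 0]
  · rw [Bmat_row_zero, if_pos rfl]
  · intro j _ hj
    rw [Bmat_row_zero, if_neg hj]
    ring
  · intro h; simp at h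

lemma Bmat_mulVec_succ (n : ℕ) (c : ℝ) (β : Fin n → ℝ) (w : Fin (n+1) → ℝ) (k : Fin n) :
    (Bmat n c β).mulVec w k.succ = β k * w 0 + w k.succ := by
  rw [Matrix.mulVec, dotProduct]
  rw [Fin.sum_univ_succ]
  have h0 : Bmat n c β k.succ 0 * w 0 = β k * w 0 := by
    rw [Bmat_row_succ, if_pos rfl]
  have h1 : ∑ i : Fin n, Bmat n c β k.succ i.succ * w i.succ = w k.succ := by
    rw [Finset.sum_eq_single k]
    · rw [Bmat_row_succ, if_neg (Fin.succ_ne_zero k), if_pos rfl]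
      ring
    · intro l _ hl
      rw [Bmat_row_succ, if_neg (Fin.succ_ne_zero l),
        if_neg (fun hc => hl (Fin.succ_injective n hc).symm)]
      ring
    · intro h; simp at h
  rw [h0, h1]


lemma numeric_main (n : ℕ) (hn : 2 ≤ n) (M Q : ℝ) (hM : 1 ≤ M)
    (hQ : (2*n*M)^((3:ℝ)/2) ≤ Q) :
    1 < Q ∧ Q ≤ Q^((1:ℝ)+1/(3*n)) ∧
      (1/Q^(n+1)) * (Q^((1:ℝ)+1/(3*n)))^n = Q^(-(2:ℝ)/3) ∧
      (n*M) * Q^(-(2:ℝ)/3) ≤ 1/2 ∧ 8*M ≤ Q := by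
  have hn0 : (0:ℝ) < n := by positivity
  have hn0' : (n:ℝ) ≠ 0 := ne_of_gt hn0
  have hnn : (2:ℝ) ≤ (n:ℝ) := by exact_mod_cast hn
  have hP4 : (4:ℝ) ≤ 2*n*M := by nlinarith
  have hPpos : (0:ℝ) < 2*n*M := by linarith
  have hQ8M : 8*M ≤ Q := by
    have h1 : (2*n*M)^((3:ℝ)/2) = (2*n*M)^(1:ℝ) * (2*n*M)^((1:ℝ)/2) := by
      rw [← Real.rpow_add hPpos]
      norm_num
    have h2 : (2:ℝ) ≤ (2*n*M)^((1:ℝ)/2) := by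
      rw [← Real.sqrt_eq_rpow]
      have : Real.sqrt 4 ≤ Real.sqrt (2*n*M) := Real.sqrt_le_sqrt hP4
      have h4 : Real.sqrt 4 = 2 := by
        rw [show (4:ℝ) = 2^2 by norm_num]
        exact Real.sqrt_sq (by norm_num)
      linarith
    have h3 : (2*n*M) * 2 ≤ (2*n*M)^((3:ℝ)/2) := by
      rw [h1, Real.rpow_one]
      exact mul_le_mul_of_nonneg_left h2 hPpos.le
    nlinarith
  have hQ1 : 1 < Q := by nlinarith
  have hQpos : (0:ℝ) < Q := by linarith
  refine ⟨hQ1, ?_, ?_, ?_, hQ8M⟩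
  · nth_rewrite 1 [show Q = Q^(1:ℝ) from (Real.rpow_one Q).symm]
    apply Real.rpow_le_rpow_of_exponent_le hQ1.le
    have : (0:ℝ) ≤ 1/(3*n) := by positivity
    linarith
  · rw [show ((Q^((1:ℝ)+1/(3*n)))^n : ℝ) = (Q^((1:ℝ)+1/(3*n)))^((n:ℕ):ℝ) by
      rw [Real.rpow_natCast]]
    rw [← Real.rpow_natCast Q (n+1)]
    rw [← Real.rpow_mul hQpos.le]
    rw [one_div, ← Real.rpow_neg hQpos.le]
    rw [← Real.rpow_add hQpos]
    congr 1
    push_cast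
    field_simp
    ring
  · have h23 : 2*n*M ≤ Q^((2:ℝ)/3) := by
      have h1 : ((2*n*M)^((3:ℝ)/2))^((2:ℝ)/3) ≤ Q^((2:ℝ)/3) :=
        Real.rpow_le_rpow (Real.rpow_nonneg hPpos.le _) hQ (by norm_num)
      rw [← Real.rpow_mul hPpos.le] at h1
      norm_num at h1
      exact h1
    have hQ23pos : (0:ℝ) < Q^((2:ℝ)/3) := Real.rpow_pos_of_pos hQpos _
    rw [show (-(2:ℝ)/3) = -((2:ℝ)/3) by norm_num, Real.rpow_neg hQpos.le]
    rw [mul_inv_le_iff₀ hQ23pos]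
    nlinarith


set_option maxHeartbeats 1000000 in
/-- If the first successive minimum of `Λ(B)` is not too small, then
`|∑ xᵢ √aᵢ| ≥ 1/Q^{n+1}`. -/
theorem separation_from_lattice_minimum
    (n : ℕ) (a : Fin n → ℕ) (ha : ∀ i, 0 < a i) (x : Fin n → ℤ) (hx : x ≠ 0)
    (Q : ℝ)
    (hQ : (2 * (n : ℝ) * intNormInf n x) ^ ((3 : ℝ) / 2) ≤ Q)
    (hlam : 1 / Q ^ ((1 : ℝ) + 1 / (3 * n)) ≤
      succMin (n + 1) (Bmat n (1 / Q ^ (n + 1)) fun i => Real.sqrt (a i)) 1) :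
    1 / Q ^ (n + 1) ≤ |∑ i, (x i : ℝ) * Real.sqrt (a i)| := by
  classical
  obtain ⟨i₀, hi₀⟩ : ∃ i, x i ≠ 0 := by
    by_contra hc
    push_neg at hc
    exact hx (funext fun i => hc i)
  rcases Nat.lt_or_ge n 1 with hn0 | hn1
  · have : n = 0 := by omega
    subst this
    exact i₀.elim0
  have hM1 : (1:ℝ) ≤ intNormInf n x := by
    have h1 : 1 ≤ (x i₀).natAbs := Int.natAbs_pos.mpr hi₀
    have h2 : (x i₀).natAbs ≤ Finset.univ.sup fun i => (x i).natAbs :=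
      Finset.le_sup (f := fun i => (x i).natAbs) (Finset.mem_univ i₀)
    rw [intNormInf]
    exact_mod_cast le_trans h1 h2
  have hMabs : ∀ i, |(x i : ℝ)| ≤ intNormInf n x := by
    intro i
    rw [intNormInf, ← Int.cast_abs]
    have h2 : (x i).natAbs ≤ Finset.univ.sup fun k => (x k).natAbs :=
      Finset.le_sup (f := fun k => (x k).natAbs) (Finset.mem_univ i)
    have h3 : |x i| ≤ ((Finset.univ.sup fun k => (x k).natAbs : ℕ) : ℤ) := by
      rw [Int.abs_eq_natAbs]
      exact_mod_cast h2
    exact_mod_cast h3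
  have hsqrt1 : ∀ i, (1:ℝ) ≤ Real.sqrt (a i) := by
    intro i
    rw [Real.one_le_sqrt]
    exact_mod_cast ha i
  rcases Nat.lt_or_ge n 2 with hn1' | hn2
  · -- n = 1 : trivial case
    have hn : n = 1 := by omega
    subst hn
    have hQ2 : (2:ℝ) ≤ Q := by
      have hP : (2:ℝ) ≤ 2 * (1:ℕ) * intNormInf 1 x := by push_cast; nlinarith
      have h1 : (2 * ((1:ℕ):ℝ) * intNormInf 1 x) ^ ((1:ℝ))
          ≤ (2 * ((1:ℕ):ℝ) * intNormInf 1 x) ^ ((3:ℝ)/2) := by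
        apply Real.rpow_le_rpow_of_exponent_le (by push_cast; nlinarith) (by norm_num)
      rw [Real.rpow_one] at h1
      calc (2:ℝ) ≤ 2 * ((1:ℕ):ℝ) * intNormInf 1 x := by push_cast; nlinarith
        _ ≤ (2 * ((1:ℕ):ℝ) * intNormInf 1 x) ^ ((3:ℝ)/2) := h1
        _ ≤ Q := hQ
    have hx0 : x 0 ≠ 0 := by
      have : i₀ = 0 := by omega
      rwa [← this]
    have h1 : (1:ℝ) ≤ |(x 0 : ℝ)| := by
      rw [← Int.cast_abs]
      exact_mod_cast Int.one_le_abs hx0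
    have hs1 : (1:ℝ) ≤ |∑ i, (x i : ℝ) * Real.sqrt (a i)| := by
      rw [Fin.sum_univ_one, abs_mul, abs_of_nonneg (Real.sqrt_nonneg _)]
      nlinarith [hsqrt1 0]
    have hc1 : 1/Q^(1+1) ≤ (1:ℝ) := by
      have hqq : Q^(1+1) = Q*Q := by ring
      rw [div_le_one (by nlinarith)]
      nlinarith
    linarith
  -- main case : n ≥ 2
  obtain ⟨hQ1, hQN, hKEY, hHALF, hQ8M⟩ := numeric_main n hn2 (intNormInf n x) Q hM1 hQ
  set M : ℝ := intNormInf n x with hMdef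
  set c : ℝ := 1/Q^(n+1) with hcdef
  set N : ℝ := Q^((1:ℝ) + 1/(3*(n:ℝ))) with hNdef
  set β : Fin n → ℝ := fun i => Real.sqrt (a i) with hβdef
  set A := Bmat n c β with hAdef
  set s : ℝ := ∑ i, (x i : ℝ) * Real.sqrt (a i) with hsdef
  have hβi : ∀ i, β i = Real.sqrt (a i) := fun i => by rw [hβdef]
  by_contra hcon
  rw [not_le] at hcon
  have hQpos : (0:ℝ) < Q := lt_trans zero_lt_one hQ1
  have hcpos : (0:ℝ) < c := by rw [hcdef]; positivity
  have hNpos : (0:ℝ) < N := by rw [hNdef]; positivity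
  have hMpos : (0:ℝ) < M := lt_of_lt_of_le zero_lt_one hM1
  have hn1n : 1 ≤ n := by omega
  have hnR : (2:ℝ) ≤ (n:ℝ) := by exact_mod_cast hn2
  -- extraction from hlam
  have hLB : ∀ z : Fin (n+1) → ℤ, A.mulVec (fun i => (z i : ℝ)) ≠ 0 →
      1/N ≤ ‖A.mulVec (fun i => (z i : ℝ))‖ := by
    intro z hz
    have hmem : ‖A.mulVec (fun i => (z i : ℝ))‖ ∈
        {R : ℝ | 0 < R ∧ ∃ v : Fin 1 → Fin (n+1) → ℤ,
        LinearIndependent ℝ (fun j => A.mulVec fun i => ((v j i : ℝ))) ∧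
        ∀ j, ‖A.mulVec fun i => ((v j i : ℝ))‖ ≤ R} := by
      refine ⟨norm_pos_iff.mpr hz, fun _ => z, ?_, fun j => le_refl _⟩
      exact linearIndependent_unique_iff.mpr hz
    have hbdd : BddBelow {R : ℝ | 0 < R ∧ ∃ v : Fin 1 → Fin (n+1) → ℤ,
        LinearIndependent ℝ (fun j => A.mulVec fun i => ((v j i : ℝ))) ∧
        ∀ j, ‖A.mulVec fun i => ((v j i : ℝ))‖ ≤ R} :=
      ⟨0, fun R hR => hR.1.le⟩
    calc 1/N ≤ succMin (n+1) A 1 := hlam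
      _ ≤ ‖A.mulVec (fun i => (z i : ℝ))‖ := csInf_le hbdd hmem
  -- choice of j
  have hne : (Finset.univ : Finset (Fin n)).Nonempty := by
    refine ⟨⟨0, by omega⟩, Finset.mem_univ _⟩
  obtain ⟨k₀, -, hk₀⟩ := Finset.exists_mem_eq_sup Finset.univ hne
    (fun i : Fin n => (x i).natAbs)
  have hMk₀ : |(x k₀ : ℝ)| = M := by
    rw [hMdef, intNormInf, hk₀, Nat.cast_natAbs, Int.cast_abs]
  set j : Fin (n+1) := k₀.succ with hjdef
  set d : Fin (n+1) → ℝ := fun i => Fin.cases (-s/c) (fun k => (x k : ℝ)) i with hddef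
  have hd0 : d 0 = -s/c := rfl
  have hdsucc : ∀ k : Fin n, d k.succ = (x k : ℝ) := by
    intro k
    rw [hddef]
    simp
  have hdj : |d j| = M := by rw [hjdef, hdsucc k₀, hMk₀]
  have hdabs : ∀ i, |d i| ≤ M := by
    intro i
    induction i using Fin.cases with
    | zero =>
      rw [hd0, abs_div, abs_neg, abs_of_pos hcpos]
      have h1 : |s|/c < 1 := (div_lt_one hcpos).mpr hcon
      linarith
    | succ k =>
      rw [hdsucc]
      exact hMabs k
  -- the pairing identity
  have hsxβ : ∑ k : Fin n, (x k : ℝ) * β k = s := by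
    rw [hsdef]
  have hpair : ∀ w : Fin (n+1) → ℝ,
      ∑ i, d i * A.mulVec w i = ∑ k : Fin n, (x k:ℝ) * w k.succ := by
    intro w
    rw [Fin.sum_univ_succ]
    have h0 : d 0 * A.mulVec w 0 = -s * w 0 := by
      rw [hd0, hAdef, Bmat_mulVec_zero]
      field_simp [hcpos.ne']
    have hk : ∀ k : Fin n, d k.succ * A.mulVec w k.succ
        = (x k:ℝ) * β k * w 0 + (x k:ℝ) * w k.succ := by
      intro k
      rw [hdsucc, hAdef, Bmat_mulVec_succ]
      ring
    rw [h0, Finset.sum_congr rfl (fun k _ => hk k), Finset.sum_add_distrib,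
      ← Finset.sum_mul, hsxβ]
    ring
  -- parameters
  set r₀ : ℝ := (1 - 1/(8*(n:ℝ)))/N with hr₀def
  have hδpos : (0:ℝ) < 1 - 1/(8*(n:ℝ)) := by
    have h1 : 1/(8*(n:ℝ)) ≤ 1/16 := by
      apply one_div_le_one_div_of_le (by norm_num)
      nlinarith
    linarith
  have hr₀pos : 0 < r₀ := div_pos hδpos hNpos
  have hr₀lt : r₀ < 1/N := by
    rw [hr₀def]
    apply div_lt_div_of_pos_right ?_ hNpos
    have : (0:ℝ) < 1/(8*(n:ℝ)) := by positivity
    linarith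
  set G : ℝ := M * r₀ + (51/50) * n * M * c / r₀^n with hGdef
  have hsecpos : (0:ℝ) < (51/50) * n * M * c / r₀^n := by positivity
  have hGM : M * r₀ ≤ G := by rw [hGdef]; linarith
  -- volume condition
  have hdet : A.det = c := by rw [hAdef]; exact Bmat_det n c β
  have hvolK : ENNReal.ofReal |A.det| * 2^(n+1) < volume (slabK j d r₀ M G) := by
    have hslab := slabK_volume hn1n j d r₀ M G hr₀pos.le hMpos hdabs hGM
    have hGmr : (G - M*r₀)/M = (51/50) * n * c / r₀^n := by
      rw [hGdef]
      field_simp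
      ring
    have hvol1 : 2*((G - M*r₀)/M) * (2*r₀)^n = 2^(n+1) * ((51/50) * n * c) := by
      rw [hGmr, mul_pow]
      have hr₀ne : r₀^n ≠ 0 := by positivity
      field_simp
      ring
    by_contra hc'
    rw [not_lt] at hc'
    have h2 : (n:ℝ≥0∞) * volume (slabK j d r₀ M G)
        ≤ (n:ℝ≥0∞) * (ENNReal.ofReal |A.det| * 2^(n+1)) :=
      mul_le_mul_right hc' _
    have h3 : (n:ℝ≥0∞) * (ENNReal.ofReal |A.det| * 2^(n+1))
        = ENNReal.ofReal ((n:ℝ) * c * 2^(n+1)) := by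
      rw [hdet, abs_of_pos hcpos]
      rw [ENNReal.ofReal_mul (by positivity), ENNReal.ofReal_mul (by positivity)]
      rw [ENNReal.ofReal_natCast, ENNReal.ofReal_pow (by norm_num)]
      norm_num
      ring
    have h4 : ENNReal.ofReal (2*((G - M*r₀)/M) * (2*r₀)^n)
        ≤ ENNReal.ofReal ((n:ℝ) * c * 2^(n+1)) :=
      le_trans hslab (le_trans h2 (le_of_eq h3))
    rw [hvol1] at h4
    rw [ENNReal.ofReal_le_ofReal_iff (by positivity)] at h4
    have hnc : (0:ℝ) < (n:ℝ) * c * 2^(n+1) := by positivity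
    nlinarith [h4]
  -- Minkowski
  obtain ⟨z, hzne, hzK⟩ := minkowski_mulVec n A (by rw [hdet]; exact hcpos.ne')
    (slabK j d r₀ M G) (slabK_symm j d r₀ M G) (slabK_convex j d r₀ M G) hvolK
  set y := A.mulVec (fun i => (z i : ℝ)) with hydef
  obtain ⟨hK1, hK2, hK3⟩ := hzK
  -- the integer pairing value
  set gv : ℤ := ∑ k : Fin n, x k * z k.succ with hgvdef
  have hgsum : ∑ i, d i * y i = (gv : ℝ) := by
    rw [hydef, hpair, hgvdef]
    push_cast
    rfl
  have hsplit : (gv:ℝ) = d j * y j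
      + ∑ k : Fin n, d (j.succAbove k) * y (j.succAbove k) := by
    rw [← hgsum, Fin.sum_univ_succAbove (fun i => d i * y i) j]
  rcases Classical.em (gv = 0) with hgv | hgv
  · -- case gv = 0 : short vector contradiction
    have hdjy : |d j * y j| ≤ M * r₀ := by
      have he : d j * y j = (gv:ℝ)
          - ∑ k : Fin n, d (j.succAbove k) * y (j.succAbove k) := by
        rw [hsplit]; ring
      rw [he, hgv]
      simpa using hK2
    have hyj : |y j| ≤ r₀ := by
      rw [abs_mul, hdj] at hdjy
      have := (mul_le_mul_iff_right₀ hMpos).mp hdjy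
      exact this
    have hynorm : ‖y‖ ≤ r₀ := by
      rw [pi_norm_le_iff_of_nonneg hr₀pos.le]
      intro i
      rw [Real.norm_eq_abs]
      rcases Classical.em (i = j) with h | h
      · rw [h]; exact hyj
      · exact hK1 i h
    have hlow := hLB z hzne
    rw [← hydef] at hlow
    linarith
  · -- case gv ≠ 0 : size contradiction
    have h1g : (1:ℝ) ≤ |(gv:ℝ)| := by
      rw [← Int.cast_abs]
      exact_mod_cast Int.one_le_abs hgv
    have hgvG : |(gv:ℝ)| ≤ G := by
      rw [← hgsum]
      exact hK3
    have hdjy : |d j * y j| ≤ G + M * r₀ := by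
      have he : d j * y j = (gv:ℝ)
          - ∑ k : Fin n, d (j.succAbove k) * y (j.succAbove k) := by
        rw [hsplit]; ring
      rw [he]
      calc |(gv:ℝ) - ∑ k : Fin n, d (j.succAbove k) * y (j.succAbove k)|
          ≤ |(gv:ℝ)| + |∑ k : Fin n, d (j.succAbove k) * y (j.succAbove k)| :=
            abs_sub _ _
        _ ≤ G + M * r₀ := add_le_add hgvG hK2
    have hgbound : |(gv:ℝ)| ≤ G + 2*(M*r₀) := by
      calc |(gv:ℝ)| = |d j * y j
            + ∑ k : Fin n, d (j.succAbove k) * y (j.succAbove k)| := by rw [← hsplit]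
        _ ≤ |d j * y j| + |∑ k : Fin n, d (j.succAbove k) * y (j.succAbove k)| :=
            abs_add_le _ _
        _ ≤ (G + M * r₀) + M * r₀ := add_le_add hdjy hK2
        _ = G + 2*(M*r₀) := by ring
    -- final numeric estimate
    have hMr : M * r₀ ≤ 1/8 := by
      have h1 : M * r₀ ≤ M * (1/N) := by
        apply mul_le_mul_of_nonneg_left hr₀lt.le hMpos.le
      have h2 : M * (1/N) ≤ M * (1/Q) := by
        apply mul_le_mul_of_nonneg_left ?_ hMpos.le
        apply one_div_le_one_div_of_le hQpos hQN
      have h3 : M * (1/Q) ≤ 1/8 := by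
        rw [mul_one_div, div_le_div_iff₀ hQpos (by norm_num)]
        linarith
      linarith
    have hbern : (7:ℝ)/8 ≤ (1 - 1/(8*(n:ℝ)))^n := by
      have h := one_add_mul_le_pow (a := -(1/(8*(n:ℝ)))) (by
        have : (0:ℝ) < 1/(8*(n:ℝ)) := by positivity
        nlinarith) n
      have he : 1 + (n:ℝ) * (-(1/(8*(n:ℝ)))) = 7/8 := by
        field_simp
        ring
      rw [he] at h
      calc (7:ℝ)/8 ≤ (1 + -(1/(8*(n:ℝ))))^n := h
        _ = (1 - 1/(8*(n:ℝ)))^n := by ring_nf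
    have hr₀pown : (7/8) * (1/N^n) ≤ r₀^n := by
      rw [hr₀def, div_pow]
      rw [div_eq_mul_one_div ((1 - 1/(8*(n:ℝ)))^n) (N^n)]
      apply mul_le_mul hbern (le_refl _) (by positivity) (by positivity)
    have hsec : (51/50) * n * M * c / r₀^n ≤ (51/50) * (8/7) * (1/2) := by
      have hNn : (0:ℝ) < N^n := by positivity
      have h1 : (51/50) * n * M * c / r₀^n ≤ (51/50) * n * M * c / ((7/8) * (1/N^n)) := by
        apply div_le_div_of_nonneg_left (by positivity) (by positivity) hr₀pown
      have h2 : (51/50) * n * M * c / ((7/8) * (1/N^n))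
          = (51/50) * (8/7) * ((n * M) * (c * N^n)) := by
        field_simp
      have h3 : c * N^n = Q^(-(2:ℝ)/3) := hKEY
      have h4 : (n * M) * (c * N^n) ≤ 1/2 := by
        rw [h3]
        exact hHALF
      calc (51/50) * n * M * c / r₀^n
          ≤ (51/50) * (8/7) * ((n * M) * (c * N^n)) := by rw [← h2]; exact h1
        _ ≤ (51/50) * (8/7) * (1/2) := by nlinarith
    have hfinal : G + 2*(M*r₀) < 1 := by
      rw [hGdef]
      have : M * r₀ + (51/50) * n * M * c / r₀^n + 2*(M*r₀)
          = 3*(M*r₀) + (51/50) * n * M * c / r₀^n := by ring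
      rw [this]
      nlinarith
    linarith
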